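/- Let 0 < ε ≤ 1/2 and let n ≥ 2 be an integer. Let V' be a finite set of at most n vertices with |V'| ≥ 2, and let G be a simple graph on V'. Sample a sequence of p := ⌈100·n^{2−2ε}·log n⌉ unordered pairs of distinct vertices of V', each chosen independently and uniformly at random, and let M be the greedy matching obtained by scanning this sequence in order. Then with probability at least 1 − n^{−9}, every vertex of V' \ V(M) has at most n^{2ε} neighbors in the induced subgraph G[V' \ V(M)]. -/

import Mathlib

set_option maxHeartbeats 1000000

attribute [local instance] Classical.propDecidable

/-- Greedy matching: scan the list of candidate pairs in order, adding a pair to the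
current matching `M` whenever it is an edge of `G` and both its endpoints are unmatched. -/
noncomputable def greedyAux {W : Type*} (G : SimpleGraph W) :
    List (Sym2 W) → Finset (Sym2 W) → Finset (Sym2 W)
  | [], M => M
  | e :: rest, M =>
      greedyAux G rest
        (if e ∈ G.edgeSet ∧ ∀ v ∈ e, ∀ f ∈ M, v ∉ f then insert e M else M)

namespace GP
def unmatchedIn {W : Type*} (M : Finset (Sym2 W)) (v : W) : Prop := ∀ f ∈ M, v ∉ f

section ClassicalHelpers
variable {W0 : Type*}

/-- one step of the greedy scan, elaborated with the classical instances used in `greedyAux` -/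
noncomputable def step (G : SimpleGraph W0) (e : Sym2 W0) (M : Finset (Sym2 W0)) :
    Finset (Sym2 W0) :=
  if e ∈ G.edgeSet ∧ ∀ v ∈ e, ∀ f ∈ M, v ∉ f then insert e M else M

lemma greedyAux_cons (G : SimpleGraph W0) (e : Sym2 W0) (rest : List (Sym2 W0))
    (M : Finset (Sym2 W0)) :
    greedyAux G (e :: rest) M = greedyAux G rest (step G e M) := rfl

lemma subset_step (G : SimpleGraph W0) (e : Sym2 W0) (M : Finset (Sym2 W0)) :
    M ⊆ step G e M := by
  unfold step
  split_ifs
  · exact Finset.subset_insert _ _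
  · exact Finset.Subset.refl _

lemma mem_step (G : SimpleGraph W0) (e : Sym2 W0) (M : Finset (Sym2 W0))
    (h : e ∈ G.edgeSet ∧ ∀ v ∈ e, ∀ f ∈ M, v ∉ f) : e ∈ step G e M := by
  unfold step
  rw [if_pos h]
  exact Finset.mem_insert_self _ _

end ClassicalHelpers

variable {W : Type*} [Fintype W] [DecidableEq W] (G : SimpleGraph W)

lemma greedyAux_subset (l : List (Sym2 W)) (M : Finset (Sym2 W)) :
    M ⊆ greedyAux G l M := by
  induction l generalizing M with
  | nil => simp [greedyAux]
  | cons e rest ih =>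
      rw [greedyAux_cons]
      exact subset_trans (subset_step G e M) (ih _)

lemma unmatchedIn_of_greedyAux {l : List (Sym2 W)} {M : Finset (Sym2 W)} {v : W}
    (h : unmatchedIn (greedyAux G l M) v) : unmatchedIn M v :=
  fun f hf => h f (greedyAux_subset G l M hf)

lemma head_ne {e : Sym2 W} {rest : List (Sym2 W)} {M : Finset (Sym2 W)} {v u : W}
    (hv : unmatchedIn (greedyAux G (e :: rest) M) v)
    (hadj : G.Adj v u) (hvM : unmatchedIn M v) (huM : unmatchedIn M u) :
    e ≠ s(v, u) := by
  rintro rfl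
  have hcond : s(v,u) ∈ G.edgeSet ∧ ∀ w ∈ s(v,u), ∀ f ∈ M, w ∉ f := by
    refine ⟨hadj, ?_⟩
    intro w hw
    rw [Sym2.mem_iff] at hw
    rcases hw with rfl | rfl
    · exact hvM
    · exact huM
  rw [greedyAux_cons] at hv
  exact hv s(v,u) (greedyAux_subset G rest _ (mem_step G _ M hcond)) (Sym2.mem_mk_left v u)

lemma count_bad (v : W) (K : ℕ) (q : ℕ) (M : Finset (Sym2 W)) :
    (Finset.univ.filter (fun ω : Fin q → {e : Sym2 W // ¬ e.IsDiag} =>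
      unmatchedIn (greedyAux G (List.ofFn fun i => (ω i).1) M) v ∧
      K < (Finset.univ.filter fun u : W =>
        G.Adj v u ∧ unmatchedIn (greedyAux G (List.ofFn fun i => (ω i).1) M) u).card)).card
    ≤ (Fintype.card {e : Sym2 W // ¬ e.IsDiag} - (K+1)) ^ q := by
  induction q generalizing M with
  | zero =>
      calc (Finset.univ.filter _).card ≤ (Finset.univ : Finset (Fin 0 → _)).card :=
            Finset.card_filter_le _ _
        _ ≤ 1 := by simp
        _ = _ ^ 0 := (pow_zero _).symm
  | succ q ih =>
      set E := {e : Sym2 W // ¬ e.IsDiag}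
      set N := Fintype.card E with hN
      set Pred : (Fin (q+1) → E) → Prop := fun ω =>
        unmatchedIn (greedyAux G (List.ofFn fun i => (ω i).1) M) v ∧
        K < (Finset.univ.filter fun u : W =>
          G.Adj v u ∧ unmatchedIn (greedyAux G (List.ofFn fun i => (ω i).1) M) u).card with hPred
      set T := Finset.univ.filter Pred with hT
      rcases Finset.eq_empty_or_nonempty T with hemp | ⟨ω₀, hω₀⟩
      · rw [hemp]; simp
      · have hbad := (Finset.mem_filter.mp hω₀).2
        -- v is unmatched in M, and S (unmatched-in-M neighbors of v) has > K elements
        have hvM : unmatchedIn M v := unmatchedIn_of_greedyAux G hbad.1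
        set S : Finset W := Finset.univ.filter (fun u => G.Adj v u ∧ unmatchedIn M u) with hS
        have hScard : K + 1 ≤ S.card := by
          refine le_trans hbad.2 (Finset.card_le_card ?_)
          intro u hu
          rw [Finset.mem_filter] at hu ⊢
          exact ⟨hu.1, hu.2.1, unmatchedIn_of_greedyAux G hu.2.2⟩
        -- the set of forbidden first elements
        set SE : Finset E := Finset.univ.filter (fun e : E => ∃ u ∈ S, e.1 = s(v, u)) with hSE
        have hSEcard : K + 1 ≤ SE.card := by
          have h1 : S.image (fun u => s(v,u)) ⊆ SE.image Subtype.val := by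
            intro x hx
            rcases Finset.mem_image.mp hx with ⟨u, hu, rfl⟩
            have hadj : G.Adj v u := (Finset.mem_filter.mp hu).2.1
            have hd : ¬ (s(v,u)).IsDiag := by
              rw [Sym2.mk_isDiag_iff]; exact G.ne_of_adj hadj
            exact Finset.mem_image.mpr ⟨⟨_, hd⟩,
              Finset.mem_filter.mpr ⟨Finset.mem_univ _, u, hu, rfl⟩, rfl⟩
          calc K + 1 ≤ S.card := hScard
            _ = (S.image (fun u => s(v,u))).card := by
                refine (Finset.card_image_of_injOn ?_).symm
                intro u₁ _ u₂ _ h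
                rcases Sym2.eq_iff.mp h with ⟨_, h⟩ | ⟨h₁, h₂⟩
                · exact h
                · rw [← h₁, h₂]
            _ ≤ (SE.image Subtype.val).card := Finset.card_le_card h1
            _ ≤ SE.card := Finset.card_image_le
        -- fiberwise decomposition on ω 0
        have hfib : T.card = ∑ e : E, (T.filter (fun ω => ω 0 = e)).card :=
          Finset.card_eq_sum_card_fiberwise (fun ω _ => Finset.mem_univ (ω 0))
        have hfiber_le : ∀ e : E, (T.filter (fun ω => ω 0 = e)).card ≤
            if e ∈ SE then 0 else (N - (K+1)) ^ q := by
          intro e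
          -- first: unfolding greedyAux on cons
          have hunfold : ∀ ω : Fin (q+1) → E, ω 0 = e →
              greedyAux G (List.ofFn fun i => (ω i).1) M =
              greedyAux G (List.ofFn fun i => ((Fin.tail ω) i).1) (step G e.1 M) := by
            intro ω h0
            rw [List.ofFn_succ, greedyAux_cons]
            simp only [h0, Fin.tail]
          by_cases he : e ∈ SE
          · rw [if_pos he]
            rw [Nat.le_zero, Finset.card_eq_zero, Finset.eq_empty_iff_forall_notMem]
            intro ω hω
            rw [Finset.mem_filter] at hω
            obtain ⟨hωT, h0⟩ := hω
            have hPω := (Finset.mem_filter.mp hωT).2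
            rcases Finset.mem_filter.mp he with ⟨-, u, hu, heq⟩
            rcases Finset.mem_filter.mp hu with ⟨-, hadj, huM⟩
            have hv' : unmatchedIn (greedyAux G ((ω 0).1 ::
                List.ofFn fun i => ((Fin.tail ω) i).1) M) v := by
              have := hPω.1
              rwa [List.ofFn_succ] at this
            have := head_ne G hv' hadj hvM huM
            rw [h0] at this
            exact this heq
          · rw [if_neg he]
            set M₁ := step G e.1 M with hM₁
            refine le_trans (Finset.card_le_card_of_injOn (fun ω => Fin.tail ω) ?_ ?_) (ih M₁)
            · intro ω hω
              rcases Finset.mem_filter.mp hω with ⟨hωT, h0⟩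
              have hPω := (Finset.mem_filter.mp hωT).2
              rw [Finset.mem_coe, Finset.mem_filter]
              refine ⟨Finset.mem_univ _, ?_, ?_⟩
              · have := hPω.1
                rwa [hunfold ω h0] at this
              · have := hPω.2
                rwa [hunfold ω h0] at this
            · intro ω₁ h₁ ω₂ h₂ h
              have e₁ : ω₁ 0 = e := (Finset.mem_filter.mp h₁).2
              have e₂ : ω₂ 0 = e := (Finset.mem_filter.mp h₂).2
              funext i
              refine Fin.cases ?_ ?_ i
              · rw [e₁, e₂]
              · intro j
                exact congrFun h j
        calc T.card = ∑ e : E, (T.filter (fun ω => ω 0 = e)).card := hfib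
          _ ≤ ∑ e : E, if e ∈ SE then 0 else (N - (K+1)) ^ q :=
              Finset.sum_le_sum (fun e _ => hfiber_le e)
          _ = (Finset.univ.filter (fun e => e ∉ SE)).card * (N - (K+1)) ^ q := by
              rw [Finset.sum_ite, Finset.sum_const, Finset.sum_const]
              simp
          _ ≤ (N - (K+1)) * (N - (K+1)) ^ q := by
              refine Nat.mul_le_mul_right _ ?_
              have : Finset.univ.filter (fun e : E => e ∉ SE) = Finset.univ \ SE := by
                ext x; simp
              rw [this, Finset.card_sdiff_of_subset (Finset.subset_univ _), Finset.card_univ]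
              exact Nat.sub_le_sub_left hSEcard N
          _ = (N - (K+1)) ^ (q + 1) := (pow_succ' _ _).symm

lemma total_bad (K : ℕ) (q : ℕ) :
    (Finset.univ.filter (fun ω : Fin q → {e : Sym2 W // ¬ e.IsDiag} =>
      ∃ v : W, unmatchedIn (greedyAux G (List.ofFn fun i => (ω i).1) ∅) v ∧
      K < (Finset.univ.filter fun u : W =>
        G.Adj v u ∧ unmatchedIn (greedyAux G (List.ofFn fun i => (ω i).1) ∅) u).card)).card
    ≤ (Fintype.card W) * (Fintype.card {e : Sym2 W // ¬ e.IsDiag} - (K+1)) ^ q := by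
  have hsub : (Finset.univ.filter (fun ω : Fin q → {e : Sym2 W // ¬ e.IsDiag} =>
      ∃ v : W, unmatchedIn (greedyAux G (List.ofFn fun i => (ω i).1) ∅) v ∧
      K < (Finset.univ.filter fun u : W =>
        G.Adj v u ∧ unmatchedIn (greedyAux G (List.ofFn fun i => (ω i).1) ∅) u).card))
      ⊆ Finset.univ.biUnion (fun v : W =>
        Finset.univ.filter (fun ω : Fin q → {e : Sym2 W // ¬ e.IsDiag} =>
          unmatchedIn (greedyAux G (List.ofFn fun i => (ω i).1) ∅) v ∧
          K < (Finset.univ.filter fun u : W =>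
            G.Adj v u ∧ unmatchedIn (greedyAux G (List.ofFn fun i => (ω i).1) ∅) u).card)) := by
    intro ω hω
    rw [Finset.mem_filter] at hω
    obtain ⟨-, v, hv⟩ := hω
    exact Finset.mem_biUnion.mpr ⟨v, Finset.mem_univ _,
      Finset.mem_filter.mpr ⟨Finset.mem_univ _, hv⟩⟩
  refine le_trans (Finset.card_le_card hsub) (le_trans Finset.card_biUnion_le ?_)
  refine le_trans (Finset.sum_le_sum (fun v _ => count_bad G v K q ∅)) ?_
  rw [Finset.sum_const, Finset.card_univ, smul_eq_mul]

end GP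

/-- The greedy matching obtained by scanning the sequence of pairs `l` in order. -/
noncomputable def greedyMatching {W : Type*} (G : SimpleGraph W) (l : List (Sym2 W)) :
    Finset (Sym2 W) :=
  greedyAux G l ∅

open GP in
/-- Sampling a sequence of `p = ⌈100·n^{2−2ε}·log n⌉` unordered pairs of distinct
vertices of `V'` independently and uniformly at random (the sample space is
`Fin p → {e : Sym2 V' // ¬e.IsDiag}` with the uniform distribution), and letting `M`
be the greedy matching obtained by scanning the sequence in order: with probability
at least `1 − n⁻⁹`, every vertex unmatched by `M` has at most `n^{2ε}` neighbors in
the induced subgraph on the unmatched vertices. -/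
theorem stmt_4 {V' : Type*} [Fintype V'] [DecidableEq V'] (G : SimpleGraph V')
    (n : ℕ) (hn : 2 ≤ n) (ε : ℝ) (hε0 : 0 < ε) (hε1 : ε ≤ 1/2)
    (hV2 : 2 ≤ Fintype.card V') (hVn : Fintype.card V' ≤ n)
    (p : ℕ) (hp : p = ⌈(100 : ℝ) * (n : ℝ) ^ ((2 : ℝ) - 2 * ε) * Real.log n⌉₊) :
    (1 : ℝ) - ((n : ℝ) ^ 9)⁻¹ ≤
      ((Finset.univ.filter (fun ω : Fin p → {e : Sym2 V' // ¬ e.IsDiag} =>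
          ∀ v : V', (∀ f ∈ greedyMatching G (List.ofFn fun i => (ω i).1), v ∉ f) →
            ((Finset.univ.filter fun u : V' =>
                G.Adj v u ∧ ∀ f ∈ greedyMatching G (List.ofFn fun i => (ω i).1), u ∉ f).card : ℝ)
              ≤ (n : ℝ) ^ (2 * ε))).card : ℝ) /
        (Fintype.card (Fin p → {e : Sym2 V' // ¬ e.IsDiag}) : ℝ) := by
  have hnR : (2:ℝ) ≤ (n:ℝ) := by exact_mod_cast hn
  have hn0 : (0:ℝ) < (n:ℝ) := by linarith
  have hn1 : (1:ℝ) ≤ (n:ℝ) := by linarith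
  set K : ℕ := ⌊(n : ℝ) ^ (2 * ε)⌋₊ with hK
  set N : ℕ := Fintype.card {e : Sym2 V' // ¬ e.IsDiag} with hN
  set m : ℕ := Fintype.card V' with hm
  have hNchoose : N = m.choose 2 := Sym2.card_subtype_not_diag
  have hNpos : 0 < N := by
    rw [hNchoose]; exact Nat.choose_pos hV2
  have hcardfun : Fintype.card (Fin p → {e : Sym2 V' // ¬ e.IsDiag}) = N ^ p := by
    rw [hN, Fintype.card_fun, Fintype.card_fin]
  -- the good predicate as it appears in the statement
  set Gpred : (Fin p → {e : Sym2 V' // ¬ e.IsDiag}) → Prop := fun ω =>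
    ∀ v : V', (∀ f ∈ greedyMatching G (List.ofFn fun i => (ω i).1), v ∉ f) →
      ((Finset.univ.filter fun u : V' =>
          G.Adj v u ∧ ∀ f ∈ greedyMatching G (List.ofFn fun i => (ω i).1), u ∉ f).card : ℝ)
        ≤ (n : ℝ) ^ (2 * ε) with hGpred
  have hcompl : ∀ ω : Fin p → {e : Sym2 V' // ¬ e.IsDiag}, ¬ Gpred ω →
      ∃ v : V', unmatchedIn (greedyAux G (List.ofFn fun i => (ω i).1) ∅) v ∧
        K < (Finset.univ.filter fun u : V' =>
          G.Adj v u ∧ unmatchedIn (greedyAux G (List.ofFn fun i => (ω i).1) ∅) u).card := by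
    intro ω h
    simp only [hGpred] at h
    push_neg at h
    obtain ⟨v, hv, hgt⟩ := h
    refine ⟨v, hv, ?_⟩
    have heq : (Finset.univ.filter fun u : V' =>
        G.Adj v u ∧ ∀ f ∈ greedyMatching G (List.ofFn fun i => (ω i).1), u ∉ f)
        = (Finset.univ.filter fun u : V' =>
        G.Adj v u ∧ unmatchedIn (greedyAux G (List.ofFn fun i => (ω i).1) ∅) u) :=
      Finset.filter_congr (fun u _ => Iff.rfl)
    rw [heq] at hgt
    rw [hK]
    exact (Nat.floor_lt (Real.rpow_nonneg hn0.le _)).mpr hgt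
  have hsplit : (Finset.univ.filter Gpred).card
      + (Finset.univ.filter (fun ω => ¬ Gpred ω)).card = N ^ p := by
    rw [Finset.card_filter_add_card_filter_not, Finset.card_univ, hcardfun]
  have hbad1 : (Finset.univ.filter (fun ω => ¬ Gpred ω)).card ≤ m * (N - (K+1)) ^ p := by
    rw [hm, hN]
    refine le_trans (Finset.card_le_card ?_) (total_bad G K p)
    intro ω hω
    rw [Finset.mem_filter] at hω ⊢
    exact ⟨Finset.mem_univ _, hcompl ω hω.2⟩
  -- analytic part
  have h2N : 2 * N ≤ n ^ 2 := by
    rw [hNchoose, Nat.choose_two_right]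
    calc 2 * (m * (m - 1) / 2) = (m * (m - 1) / 2) * 2 := Nat.mul_comm _ _
      _ ≤ m * (m-1) := Nat.div_mul_le_self _ _
      _ ≤ n * n := Nat.mul_le_mul hVn (le_trans (Nat.sub_le _ _) hVn)
      _ = n ^ 2 := (sq n).symm
  set x : ℝ := 2 * (n:ℝ) ^ (2 * ε - 2) with hx
  have hx0 : (0:ℝ) < x := by positivity
  have hxhalf : (n:ℝ) ^ (2 * ε - 2) ≤ 2⁻¹ := by
    calc (n:ℝ) ^ (2 * ε - 2) ≤ (n:ℝ) ^ (-1 : ℝ) := by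
          apply Real.rpow_le_rpow_of_exponent_le hn1
          linarith
      _ = ((n:ℝ))⁻¹ := Real.rpow_neg_one _
      _ ≤ 2⁻¹ := by
          apply inv_anti₀ <;> linarith
  have hx1 : x ≤ 1 := by rw [hx]; linarith
  have hNx : (N : ℝ) * x ≤ K + 1 := by
    have h1 : (N : ℝ) * x = ((2 * N : ℕ) : ℝ) * (n:ℝ) ^ (2 * ε - 2) := by
      push_cast; ring
    have h2 : ((2 * N : ℕ) : ℝ) ≤ ((n:ℝ)) ^ (2:ℝ) := by
      rw [Real.rpow_two]
      exact_mod_cast h2N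
    calc (N : ℝ) * x ≤ ((n:ℝ)) ^ (2:ℝ) * (n:ℝ) ^ (2 * ε - 2) := by
          rw [h1]
          exact mul_le_mul_of_nonneg_right h2 (Real.rpow_nonneg hn0.le _)
      _ = (n:ℝ) ^ (2 * ε) := by
          rw [← Real.rpow_add hn0]; ring_nf
      _ ≤ K + 1 := le_of_lt (Nat.lt_floor_add_one _)
  have hBN : ((N - (K+1) : ℕ) : ℝ) ≤ (N : ℝ) * (1 - x) := by
    rcases le_or_gt (K+1) N with h | h
    · rw [Nat.cast_sub h]
      push_cast
      nlinarith [hNx]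
    · rw [Nat.sub_eq_zero_of_le (le_of_lt h)]
      push_cast
      have : (0:ℝ) < N := by exact_mod_cast hNpos
      nlinarith [hNx]
  have hlog : 0 < Real.log n := Real.log_pos (by exact_mod_cast (by omega : 1 < n))
  have hp' : (100:ℝ) * (n:ℝ) ^ ((2:ℝ) - 2*ε) * Real.log n ≤ (p:ℝ) := by
    rw [hp]; exact Nat.le_ceil _
  have hxp : 200 * Real.log n ≤ x * p := by
    have hprod : (n:ℝ) ^ (2*ε - 2) * (n:ℝ) ^ ((2:ℝ) - 2*ε) = 1 := by
      rw [← Real.rpow_add hn0]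
      have : 2*ε - 2 + ((2:ℝ) - 2*ε) = 0 := by ring
      rw [this, Real.rpow_zero]
    calc 200 * Real.log n
        = x * ((100:ℝ) * (n:ℝ) ^ ((2:ℝ) - 2*ε) * Real.log n) := by
          rw [hx]; nlinarith [hprod]
      _ ≤ x * p := mul_le_mul_of_nonneg_left hp' hx0.le
  have h1x : (1 - x)^p ≤ Real.exp (-(200 * Real.log n)) := by
    calc (1 - x)^p ≤ (Real.exp (-x))^p := by
          apply pow_le_pow_left₀ (by linarith)
          linarith [Real.add_one_le_exp (-x)]
      _ = Real.exp (-(x * p)) := by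
          rw [← Real.exp_nat_mul]
          congr 1; ring
      _ ≤ Real.exp (-(200 * Real.log n)) := by
          apply Real.exp_le_exp.mpr
          linarith
  have hexp200 : Real.exp (-(200 * Real.log n)) = (n:ℝ) ^ (-200 : ℝ) := by
    rw [Real.rpow_def_of_pos hn0]
    congr 1; ring
  have hn199 : (n:ℝ) * (n:ℝ) ^ (-200 : ℝ) ≤ ((n:ℝ) ^ 9)⁻¹ := by
    have e1 : (n:ℝ) * (n:ℝ) ^ (-200 : ℝ) = (n:ℝ) ^ (-199 : ℝ) := by
      nth_rewrite 1 [← Real.rpow_one (n:ℝ)]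
      rw [← Real.rpow_add hn0]
      norm_num
    have e2 : (n:ℝ) ^ (-199 : ℝ) ≤ (n:ℝ) ^ (-9 : ℝ) :=
      Real.rpow_le_rpow_of_exponent_le hn1 (by norm_num)
    have e3 : (n:ℝ) ^ (-9 : ℝ) = ((n:ℝ) ^ 9)⁻¹ := by
      rw [Real.rpow_neg hn0.le]
      norm_num
    rw [e1, ← e3]; exact e2
  -- final combination
  have hfinal : (m:ℝ) * (((N - (K+1) : ℕ)):ℝ)^p ≤ ((n:ℝ)^9)⁻¹ * (N:ℝ)^p := by
    have hNpR : (0:ℝ) ≤ (N:ℝ)^p := by positivity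
    have hmn : (m:ℝ) ≤ (n:ℝ) := by exact_mod_cast hVn
    have hBp : (((N - (K+1) : ℕ)):ℝ)^p ≤ ((N:ℝ) * (1 - x))^p :=
      pow_le_pow_left₀ (Nat.cast_nonneg _) hBN p
    calc (m:ℝ) * (((N - (K+1) : ℕ)):ℝ)^p
        ≤ (n:ℝ) * ((N:ℝ) * (1 - x))^p := by
          apply mul_le_mul hmn hBp (by positivity) hn0.le
      _ = (n:ℝ) * ((N:ℝ)^p * (1-x)^p) := by rw [mul_pow]
      _ ≤ (n:ℝ) * ((N:ℝ)^p * Real.exp (-(200 * Real.log n))) := by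
          apply mul_le_mul_of_nonneg_left _ hn0.le
          exact mul_le_mul_of_nonneg_left h1x hNpR
      _ = (N:ℝ)^p * ((n:ℝ) * (n:ℝ) ^ (-200 : ℝ)) := by rw [hexp200]; ring
      _ ≤ (N:ℝ)^p * ((n:ℝ)^9)⁻¹ := mul_le_mul_of_nonneg_left hn199 hNpR
      _ = ((n:ℝ)^9)⁻¹ * (N:ℝ)^p := by ring
  -- put everything together
  rw [hcardfun]
  have hNpR : (0:ℝ) < ((N:ℕ):ℝ)^p := by positivity
  rw [le_div_iff₀ (by exact_mod_cast hNpR)]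
  have hsplitR : ((Finset.univ.filter Gpred).card : ℝ)
      + ((Finset.univ.filter (fun ω => ¬ Gpred ω)).card : ℝ) = ((N:ℝ))^p := by
    exact_mod_cast congrArg (Nat.cast : ℕ → ℝ) hsplit
  have hbadR : ((Finset.univ.filter (fun ω => ¬ Gpred ω)).card : ℝ)
      ≤ (m:ℝ) * (((N - (K+1) : ℕ)):ℝ)^p := by
    exact_mod_cast hbad1
  push_cast
  nlinarith [hfinal, hsplitR, hbadR, hNpR]
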